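/- Let n, m be positive natural numbers and let 0 < δ ≤ 1/2. If m/n > h(δ), then there exists a parity-check matrix H ∈ Matrix (Fin m) (Fin n) (ZMod 2) such that every nonzero x ∈ (ZMod 2)^n with H·x = 0 has Hamming weight strictly greater than δ·n; that is, there exists a binary linear code of length n, dimension at least n - m, and minimum distance greater than δ·n. -/

import Mathlib

/-- The binary entropy function `h(x) = -x log₂ x - (1-x) log₂ (1-x)`. -/
noncomputable def binEnt (x : ℝ) : ℝ := -x * Real.logb 2 x - (1 - x) * Real.logb 2 (1 - x)

private lemma gv_ker_card (n : ℕ) (x : Fin n → ZMod 2) (hx : x ≠ 0) :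
    (Finset.univ.filter (fun r : Fin n → ZMod 2 => dotProduct r x = 0)).card
      = 2 ^ (n - 1) := by
  obtain ⟨j, hj⟩ := Function.ne_iff.mp hx
  have hj' : x j ≠ 0 := by simpa using hj
  have hxj : x j = 1 := by revert hj'; generalize x j = a; revert a; decide
  set e : Fin n → ZMod 2 := Pi.single j 1 with he
  have hee : e + e = 0 := by
    funext i
    simp only [Pi.add_apply, Pi.zero_apply, he, Pi.single_apply]
    split_ifs <;> decide
  have hedot : dotProduct e x = 1 := by
    rw [he, single_dotProduct, hxj, mul_one]
  have hcards : (Finset.univ.filter (fun r : Fin n → ZMod 2 => dotProduct r x = 0)).card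
      = (Finset.univ.filter (fun r : Fin n → ZMod 2 => ¬ dotProduct r x = 0)).card := by
    apply Finset.card_bij (fun r _ => r + e)
    · intro r hr
      simp only [Finset.mem_filter, Finset.mem_univ, true_and] at hr ⊢
      rw [add_dotProduct, hr, hedot, zero_add]
      decide
    · intro a _ b _ hab
      have := congrArg (· + e) hab
      simpa [add_assoc, hee] using this
    · intro b hb
      refine ⟨b + e, ?_, by rw [add_assoc, hee, add_zero]⟩
      simp only [Finset.mem_filter, Finset.mem_univ, true_and] at hb ⊢
      rw [add_dotProduct, hedot]
      revert hb; generalize dotProduct b x = a; revert a; decide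
  have hsplit := Finset.card_filter_add_card_filter_not
    (s := (Finset.univ : Finset (Fin n → ZMod 2)))
    (p := fun r => dotProduct r x = 0)
  have hcard_univ : (Finset.univ : Finset (Fin n → ZMod 2)).card = 2 ^ n := by
    simp [Finset.card_univ]
  have hn : 0 < n := by
    rcases Nat.eq_zero_or_pos n with h | h
    · subst h
      exact absurd (funext fun i => i.elim0) hx
    · exact h
  rw [hcard_univ, ← hcards] at hsplit
  have h2 : 2 ^ n = 2 * 2 ^ (n - 1) := by
    rw [← pow_succ']
    congr 1
    omega
  omega

private lemma gv_choose_sum_le (n t : ℕ) (δ : ℝ) (hδ : 0 < δ) (hδ' : δ ≤ 1/2)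
    (ht : (t : ℝ) ≤ δ * n) (htn : t ≤ n) :
    (∑ k ∈ Finset.range (t+1), (n.choose k : ℝ)) ≤ 2 ^ ((n:ℝ) * binEnt δ) := by
  have h1δ : 0 < 1 - δ := by linarith
  set c : ℝ := δ ^ (δ * n) * (1-δ) ^ ((1-δ) * n) with hc
  have hcpos : 0 < c := by positivity
  have key : ∀ k ∈ Finset.range (t+1), c ≤ δ ^ k * (1-δ) ^ (n - k) := by
    intro k hk
    rw [Finset.mem_range, Nat.lt_succ_iff] at hk
    have hkt : (k:ℝ) ≤ δ * n := le_trans (by exact_mod_cast hk) ht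
    have hkn : k ≤ n := le_trans hk htn
    have hnk : ((n - k : ℕ) : ℝ) = (n:ℝ) - k := by push_cast [Nat.cast_sub hkn]; ring
    have e1 : δ ^ (δ * n) = δ ^ (k:ℝ) * δ ^ (δ * n - k) := by
      rw [← Real.rpow_add hδ]; ring_nf
    have e2 : ((1-δ) ^ ((1-δ) * n) : ℝ)
        = (1-δ) ^ ((n:ℝ) - k) * ((1-δ) ^ (δ * n - (k:ℝ)))⁻¹ := by
      rw [← Real.rpow_neg h1δ.le, ← Real.rpow_add h1δ]; ring_nf
    have hfac : δ ^ (δ * n - (k:ℝ)) * ((1-δ) ^ (δ * n - (k:ℝ)))⁻¹ ≤ 1 := by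
      rw [← div_eq_mul_inv, ← Real.div_rpow hδ.le h1δ.le]
      exact Real.rpow_le_one (by positivity) (by rw [div_le_one h1δ]; linarith) (by linarith)
    calc c = (δ ^ (k:ℝ) * (1-δ) ^ ((n:ℝ) - k))
            * (δ ^ (δ * n - (k:ℝ)) * ((1-δ) ^ (δ * n - (k:ℝ)))⁻¹) := by
          rw [hc, e1, e2]; ring
    _ ≤ (δ ^ (k:ℝ) * (1-δ) ^ ((n:ℝ) - k)) * 1 := by
          apply mul_le_mul_of_nonneg_left hfac (by positivity)
    _ = δ ^ k * (1-δ) ^ (n - k) := by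
          rw [mul_one, ← hnk, Real.rpow_natCast, Real.rpow_natCast]
  have hsum1 : (∑ k ∈ Finset.range (t+1), (n.choose k : ℝ) * c)
      ≤ ∑ k ∈ Finset.range (n+1), (n.choose k : ℝ) * (δ ^ k * (1-δ) ^ (n - k)) := by
    apply le_trans (Finset.sum_le_sum (fun k hk => ?_))
      (Finset.sum_le_sum_of_subset_of_nonneg
        (Finset.range_subset_range.mpr (by omega)) (fun k _ _ => by positivity))
    exact mul_le_mul_of_nonneg_left (key k hk) (by positivity)
  have hbinom : (∑ k ∈ Finset.range (n+1), (n.choose k : ℝ) * (δ ^ k * (1-δ) ^ (n - k))) = 1 := by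
    calc (∑ k ∈ Finset.range (n+1), (n.choose k : ℝ) * (δ ^ k * (1-δ) ^ (n - k)))
        = ∑ k ∈ Finset.range (n+1), δ ^ k * (1-δ) ^ (n - k) * (n.choose k : ℝ) :=
          Finset.sum_congr rfl (fun k _ => by ring)
      _ = (δ + (1-δ)) ^ n := (add_pow δ (1-δ) n).symm
      _ = 1 := by norm_num
  rw [← Finset.sum_mul] at hsum1
  have hS : (∑ k ∈ Finset.range (t+1), (n.choose k : ℝ)) ≤ c⁻¹ := by
    rw [← one_div, le_div_iff₀ hcpos]
    linarith
  have hpow : ∀ a b : ℝ, 0 < a → (2:ℝ) ^ (Real.logb 2 a * b) = a ^ b := by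
    intro a b ha
    rw [Real.rpow_mul (by norm_num), Real.rpow_logb (by norm_num) (by norm_num) ha]
  have hcinv : c⁻¹ = 2 ^ ((n:ℝ) * binEnt δ) := by
    have : (n:ℝ) * binEnt δ = -(Real.logb 2 δ * (δ * n) + Real.logb 2 (1-δ) * ((1-δ) * n)) := by
      unfold binEnt; ring
    rw [this, Real.rpow_neg (by norm_num), Real.rpow_add (by norm_num : (0:ℝ) < 2),
      hpow δ _ hδ, hpow (1-δ) _ h1δ, hc]
  rw [← hcinv]
  exact hS

/-- (Gilbert–Varshamov style existence) If `m/n > h(δ)` with `0 < δ ≤ 1/2`, then there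
exists a parity-check matrix `H ∈ Matrix (Fin m) (Fin n) (ZMod 2)` such that every
nonzero `x` with `H·x = 0` has Hamming weight strictly greater than `δ·n`; i.e. there is
a binary linear code of length `n`, dimension at least `n - m`, and minimum distance
greater than `δ·n`. -/
theorem stmt_3 (n m : ℕ) (hn : 0 < n) (hm : 0 < m) (δ : ℝ) (hδ : 0 < δ) (hδ' : δ ≤ 1 / 2)
    (hrate : (m : ℝ) / n > binEnt δ) :
    ∃ H : Matrix (Fin m) (Fin n) (ZMod 2),
      ∀ x : Fin n → ZMod 2, x ≠ 0 → H.mulVec x = 0 → (hammingNorm x : ℝ) > δ * n := by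
  classical
  set t : ℕ := ⌊δ * n⌋₊ with htdef
  have hδn_nonneg : (0:ℝ) ≤ δ * n := by positivity
  have ht : (t : ℝ) ≤ δ * n := Nat.floor_le hδn_nonneg
  have htn : t ≤ n := by
    have : δ * n ≤ (n : ℝ) := by nlinarith [Nat.cast_nonneg (α := ℝ) n]
    calc t = ⌊δ * n⌋₊ := rfl
    _ ≤ ⌊(n:ℝ)⌋₊ := Nat.floor_le_floor this
    _ = n := Nat.floor_natCast n
  set S : Finset (Fin n → ZMod 2) :=
    Finset.univ.filter (fun x : Fin n → ZMod 2 => x ≠ 0 ∧ hammingNorm x ≤ t) with hSdef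
  -- Bound the cardinality of S by the sum of binomial coefficients
  have hScard : S.card ≤ ∑ k ∈ Finset.range (t+1), n.choose k := by
    set T : Finset (Finset (Fin n)) :=
      (Finset.range (t+1)).biUnion
        (fun k => Finset.powersetCard k (Finset.univ : Finset (Fin n))) with hTdef
    have hTcard : T.card = ∑ k ∈ Finset.range (t+1), n.choose k := by
      rw [hTdef, Finset.card_biUnion]
      · apply Finset.sum_congr rfl
        intro k _
        rw [Finset.card_powersetCard, Finset.card_univ, Fintype.card_fin]
      · intro i _ j _ hij
        rw [Function.onFun, Finset.disjoint_left]
        intro s hsi hsj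
        rw [Finset.mem_powersetCard] at hsi hsj
        exact hij (hsi.2 ▸ hsj.2 ▸ rfl)
    rw [← hTcard]
    apply Finset.card_le_card_of_injOn (fun x => Finset.univ.filter (fun i => x i ≠ 0))
    · intro x hx
      rw [hSdef, Finset.mem_coe, Finset.mem_filter] at hx
      obtain ⟨-, hx0, hxt⟩ := hx
      rw [hTdef, Finset.mem_coe, Finset.mem_biUnion]
      exact ⟨hammingNorm x, Finset.mem_range.mpr (Nat.lt_succ_of_le hxt),
        Finset.mem_powersetCard.mpr ⟨Finset.subset_univ _, rfl⟩⟩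
    · intro x hx y hy hxy
      funext i
      have hmem : (i ∈ Finset.univ.filter (fun i => x i ≠ 0))
          ↔ (i ∈ Finset.univ.filter (fun i => y i ≠ 0)) := Finset.ext_iff.mp hxy i
      simp only [Finset.mem_filter, Finset.mem_univ, true_and] at hmem
      have hone : ∀ a : ZMod 2, a ≠ 0 → a = 1 := by decide
      by_cases h : x i = 0
      · by_cases h' : y i = 0
        · rw [h, h']
        · exact absurd (hmem.mpr h') (by simp [h])
      · have h' : y i ≠ 0 := hmem.mp h
        rw [hone _ h, hone _ h']
  -- S.card < 2^m
  have hnR : (0:ℝ) < n := by exact_mod_cast hn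
  have hexp : (n:ℝ) * binEnt δ < m := by
    rw [gt_iff_lt, lt_div_iff₀ hnR] at hrate
    linarith
  have hmain : (∑ k ∈ Finset.range (t+1), (n.choose k : ℝ)) < 2^m := by
    calc (∑ k ∈ Finset.range (t+1), (n.choose k : ℝ))
        ≤ 2 ^ ((n:ℝ) * binEnt δ) := gv_choose_sum_le n t δ hδ hδ' ht htn
      _ < 2 ^ ((m:ℕ) : ℝ) := by
          apply Real.rpow_lt_rpow_left_iff (by norm_num : (1:ℝ) < 2) |>.mpr hexp
      _ = 2 ^ m := by rw [Real.rpow_natCast]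
  have hSlt : S.card < 2 ^ m := by
    have h1 : ((S.card : ℕ) : ℝ) ≤ ∑ k ∈ Finset.range (t+1), (n.choose k : ℝ) := by
      exact_mod_cast hScard
    have h2 : ((S.card : ℕ) : ℝ) < ((2^m : ℕ) : ℝ) := by push_cast; linarith
    exact_mod_cast h2
  -- the bad set of matrices
  set Bad : Finset (Matrix (Fin m) (Fin n) (ZMod 2)) :=
    Finset.univ.filter (fun H => ∃ x ∈ S, H.mulVec x = 0) with hBadDef
  have hmv : ∀ (H : Matrix (Fin m) (Fin n) (ZMod 2)) (x : Fin n → ZMod 2),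
      H.mulVec x = 0 ↔ ∀ i, dotProduct (H i) x = 0 := by
    intro H x
    rw [funext_iff]; simp [Matrix.mulVec]
  have hfix : ∀ x ∈ S,
      (Finset.univ.filter
        (fun H : Matrix (Fin m) (Fin n) (ZMod 2) => H.mulVec x = 0)).card
        = (2 ^ (n-1)) ^ m := by
    intro x hx
    rw [hSdef, Finset.mem_filter] at hx
    set A : Finset (Fin n → ZMod 2) :=
      Finset.univ.filter (fun r : Fin n → ZMod 2 => dotProduct r x = 0) with hA
    have heq : (Finset.univ.filter
        (fun H : Matrix (Fin m) (Fin n) (ZMod 2) => H.mulVec x = 0))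
        = Fintype.piFinset (fun _ : Fin m => A) := by
      ext H
      simp only [Finset.mem_filter, Finset.mem_univ, true_and, hmv H x]
      erw [Fintype.mem_piFinset (t := fun _ : Fin m => A) (f := H)]
      simp [hA]
    rw [heq]; erw [Fintype.card_piFinset]
    simp [hA, gv_ker_card n x hx.2.1]
  have hBadCard : Bad.card < 2 ^ m * (2 ^ (n-1)) ^ m := by
    calc Bad.card
        ≤ (S.biUnion (fun x => Finset.univ.filter
            (fun H : Matrix (Fin m) (Fin n) (ZMod 2) => H.mulVec x = 0))).card := by
          apply Finset.card_le_card
          intro H hH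
          rw [hBadDef, Finset.mem_filter] at hH
          obtain ⟨-, x, hxS, hx0⟩ := hH
          exact Finset.mem_biUnion.mpr ⟨x, hxS, by simp [hx0]⟩
      _ ≤ ∑ x ∈ S, (Finset.univ.filter
            (fun H : Matrix (Fin m) (Fin n) (ZMod 2) => H.mulVec x = 0)).card :=
          Finset.card_biUnion_le
      _ = ∑ _x ∈ S, (2 ^ (n-1)) ^ m := Finset.sum_congr rfl hfix
      _ = S.card * (2 ^ (n-1)) ^ m := by rw [Finset.sum_const, smul_eq_mul]
      _ < 2 ^ m * (2 ^ (n-1)) ^ m := by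
          exact mul_lt_mul_of_pos_right hSlt (by positivity)
  have hTotal : (Finset.univ : Finset (Matrix (Fin m) (Fin n) (ZMod 2))).card
      = 2 ^ m * (2 ^ (n-1)) ^ m := by
    rw [Finset.card_univ]
    show Fintype.card (Fin m → Fin n → ZMod 2) = _
    simp only [Fintype.card_fun, Fintype.card_fin, ZMod.card]
    rw [← Nat.mul_pow]
    congr 1
    have hn1 : n - 1 + 1 = n := by omega
    calc 2 ^ n = 2 ^ (n - 1 + 1) := by rw [hn1]
      _ = 2 * 2 ^ (n - 1) := by rw [pow_succ']
  have hex : ∃ H : Matrix (Fin m) (Fin n) (ZMod 2), H ∉ Bad := by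
    by_contra hcon
    push_neg at hcon
    have : (Finset.univ : Finset (Matrix (Fin m) (Fin n) (ZMod 2))).card ≤ Bad.card :=
      Finset.card_le_card (fun H _ => hcon H)
    rw [hTotal] at this
    omega
  obtain ⟨H, hH⟩ := hex
  refine ⟨H, fun x hx0 hHx => ?_⟩
  have hxS : x ∉ S := by
    intro hxS
    exact hH (by rw [hBadDef, Finset.mem_filter]; exact ⟨Finset.mem_univ _, x, hxS, hHx⟩)
  rw [hSdef, Finset.mem_filter] at hxS
  push_neg at hxS
  have hwt : t < hammingNorm x := by
    by_contra hcon
    push_neg at hcon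
    exact absurd (hxS (Finset.mem_univ _) hx0) (by omega)
  have := (Nat.floor_lt hδn_nonneg).mp hwt
  linarith
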